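/- Let V and W be finite-dimensional real inner product spaces, let (J₁, J₂, J₃) be a compatible quaternionic structure on V, and let (e_1, …, e_n, η_1, …, η_d) be an orthonormal basis of V × W. Writing x¹ for the V-component of x ∈ V × W, for each s ∈ {1, 2, 3} one has Σ_{j=1}^{n} Σ_{β=1}^{d} ( ⟨e_j¹, η_β¹⟩² − Σ_{k=1}^{3} ⟨e_j¹, J_k(η_β¹)⟩² ) = −Σ_{k∈{1,2,3}, k≠s} Σ_{j=1}^{n} Σ_{β=1}^{d} ⟨J_k(η_β¹), e_j¹⟩² + Σ_{β=1}^{d} Σ_{l=1}^{d} ( ⟨J_s(η_β¹), η_l¹⟩² − ⟨η_β¹, η_l¹⟩² ). (This is the normal-vector identity (hMAIN) in the paper's Lemma 4.1, the algebraic core of the general second-variation formula in ℍP^{m₁/4} × M.) -/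

import Mathlib

open scoped RealInnerProductSpace

/-- Normal-vector identity (hMAIN) in the paper's Lemma 4.1. -/
theorem stmt_10 {V W : Type*} [NormedAddCommGroup V] [InnerProductSpace ℝ V]
    [FiniteDimensional ℝ V] [NormedAddCommGroup W] [InnerProductSpace ℝ W]
    [FiniteDimensional ℝ W] (J : Fin 3 → (V →ₗ[ℝ] V))
    (hiso : ∀ (k : Fin 3) (x y : V), ⟪J k x, J k y⟫ = ⟪x, y⟫)
    (hsq : ∀ (k : Fin 3) (x : V), J k (J k x) = -x)
    (hcomp : ∀ x : V, J 0 (J 1 x) = J 2 x)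
    {n d : ℕ} (b : OrthonormalBasis (Fin n ⊕ Fin d) ℝ (WithLp 2 (V × W)))
    (s : Fin 3) :
    ∑ j : Fin n, ∑ β : Fin d,
      (⟪(b (Sum.inl j)).fst, (b (Sum.inr β)).fst⟫ ^ 2
        - ∑ k : Fin 3, ⟪(b (Sum.inl j)).fst, J k ((b (Sum.inr β)).fst)⟫ ^ 2)
      = -(∑ k ∈ ({s}ᶜ : Finset (Fin 3)), ∑ j : Fin n, ∑ β : Fin d,
            ⟪J k ((b (Sum.inr β)).fst), (b (Sum.inl j)).fst⟫ ^ 2)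
        + ∑ β : Fin d, ∑ l : Fin d,
            (⟪J s ((b (Sum.inr β)).fst), (b (Sum.inr l)).fst⟫ ^ 2
              - ⟪(b (Sum.inr β)).fst, (b (Sum.inr l)).fst⟫ ^ 2) := by
  classical
  set f : Fin n → V := fun j => (b (Sum.inl j)).fst with hf
  set g : Fin d → V := fun l => (b (Sum.inr l)).fst with hg
  -- Parseval for vectors of the form (u, 0)
  have key : ∀ u : V, ∑ i : Fin n ⊕ Fin d, ⟪u, (b i).fst⟫ ^ 2 = ⟪u, u⟫ := by
    intro u
    have h := b.sum_inner_mul_inner (WithLp.toLp 2 (u, (0 : W)))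
      (WithLp.toLp 2 (u, (0 : W)))
    simp only [WithLp.prod_inner_apply, WithLp.toLp_fst, WithLp.toLp_snd, inner_zero_left, inner_zero_right, add_zero] at h
    rw [← h]
    refine Finset.sum_congr rfl fun i _ => ?_
    rw [sq, real_inner_comm]
    exact congrArg₂ (· * ·) (real_inner_comm u _) rfl
  have hP : ∀ v : V, ∑ j : Fin n, ⟪v, f j⟫ ^ 2 = ⟪v, v⟫ - ∑ l : Fin d, ⟪v, g l⟫ ^ 2 := by
    intro v
    have h := key v
    rw [Fintype.sum_sum_type] at h
    linarith
  have hL : ∀ β, ∑ j : Fin n, ⟪f j, g β⟫ ^ 2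
      = ⟪g β, g β⟫ - ∑ l : Fin d, ⟪g β, g l⟫ ^ 2 := by
    intro β
    rw [← hP (g β)]
    exact Finset.sum_congr rfl fun j _ => by rw [real_inner_comm]
  have hLk : ∀ (k : Fin 3) β, ∑ j : Fin n, ⟪J k (g β), f j⟫ ^ 2
      = ⟪g β, g β⟫ - ∑ l : Fin d, ⟪J k (g β), g l⟫ ^ 2 := by
    intro k β
    rw [hP (J k (g β)), hiso]
  have hLHS : ∑ j : Fin n, ∑ β : Fin d,
      (⟪f j, g β⟫ ^ 2 - ∑ k : Fin 3, ⟪f j, J k (g β)⟫ ^ 2)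
      = ∑ β : Fin d, ((⟪g β, g β⟫ - ∑ l : Fin d, ⟪g β, g l⟫ ^ 2)
          - ∑ k : Fin 3, (⟪g β, g β⟫ - ∑ l : Fin d, ⟪J k (g β), g l⟫ ^ 2)) := by
    rw [Finset.sum_comm]
    refine Finset.sum_congr rfl fun β _ => ?_
    rw [Finset.sum_sub_distrib]
    congr 1
    · exact hL β
    · rw [Finset.sum_comm]
      refine Finset.sum_congr rfl fun k _ => ?_
      rw [← hLk k β]
      exact Finset.sum_congr rfl fun j _ => by rw [real_inner_comm]
  have h1 : ∀ k : Fin 3, ∑ j : Fin n, ∑ β : Fin d, ⟪J k (g β), f j⟫ ^ 2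
      = ∑ β : Fin d, (⟪g β, g β⟫ - ∑ l : Fin d, ⟪J k (g β), g l⟫ ^ 2) := by
    intro k
    rw [Finset.sum_comm]
    exact Finset.sum_congr rfl fun β _ => hLk k β
  rw [hLHS]
  show _ = -(∑ k ∈ ({s}ᶜ : Finset (Fin 3)), ∑ j : Fin n, ∑ β : Fin d, ⟪J k (g β), f j⟫ ^ 2) + ∑ β : Fin d, ∑ l : Fin d, (⟪J s (g β), g l⟫ ^ 2 - ⟪g β, g l⟫ ^ 2)
  simp only [h1]
  rw [Finset.sum_comm, ← Finset.sum_neg_distrib, ← Finset.sum_add_distrib]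
  refine Finset.sum_congr rfl fun β _ => ?_
  have hT : ∑ k ∈ ({s}ᶜ : Finset (Fin 3)), (⟪g β, g β⟫ - ∑ l : Fin d, ⟪J k (g β), g l⟫ ^ 2)
      = (∑ k : Fin 3, (⟪g β, g β⟫ - ∑ l : Fin d, ⟪J k (g β), g l⟫ ^ 2))
        - (⟪g β, g β⟫ - ∑ l : Fin d, ⟪J s (g β), g l⟫ ^ 2) := by
    have := Finset.sum_compl_add_sum ({s} : Finset (Fin 3))
      (fun k => ⟪g β, g β⟫ - ∑ l : Fin d, ⟪J k (g β), g l⟫ ^ 2)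
    rw [Finset.sum_singleton] at this
    linarith
  rw [hT, Finset.sum_sub_distrib, Finset.sum_sub_distrib]
  ring
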